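/- arXiv:2002.04190 — 4 statements merged into one kernel-verified Lean document; each statement's English description precedes it below -/
import Mathlib

section
/- A sequence of real numbers (x_n) converges statistically to ξ if and only if for every subset A of ℕ with positive upper natural density, there exists an infinite subset A' ⊆ A such that the subsequence (x_n)_{n ∈ A'} converges to ξ in the usual sense. -/
open Filter Topology Set

/-- Upper natural density of a set of naturals. -/
noncomputable def upperDensity (A : Set ℕ) : ℝ :=
  Filter.limsup (fun n => (Nat.card ↥(A ∩ Set.Iio n) : ℝ) / n) Filter.atTop

/-- `A` has natural density `δ`. -/
def HasDensity (A : Set ℕ) (δ : ℝ) : Prop :=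
  Filter.Tendsto (fun n => (Nat.card ↥(A ∩ Set.Iio n) : ℝ) / n) Filter.atTop (nhds δ)

/-- Statistical convergence of a real sequence. -/
def StatTendsto (x : ℕ → ℝ) (ξ : ℝ) : Prop :=
  ∀ ε : ℝ, 0 < ε → HasDensity {n | ε ≤ |x n - ξ|} 0

private lemma card_inter_Iio_le (A : Set ℕ) (n : ℕ) : Nat.card ↥(A ∩ Set.Iio n) ≤ n := by
  rw [Nat.card_coe_set_eq]
  calc (A ∩ Set.Iio n).ncard ≤ (Set.Iio n).ncard :=
        Set.ncard_le_ncard Set.inter_subset_right (Set.finite_Iio n)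
    _ = n := by rw [← Finset.coe_Iio, Set.ncard_coe_finset, Nat.card_Iio]

private lemma densityFun_nonneg (A : Set ℕ) (n : ℕ) :
    0 ≤ (Nat.card ↥(A ∩ Set.Iio n) : ℝ) / n := by positivity

private lemma densityFun_le_one (A : Set ℕ) (n : ℕ) :
    (Nat.card ↥(A ∩ Set.Iio n) : ℝ) / n ≤ 1 := by
  rcases Nat.eq_zero_or_pos n with h | h
  · simp [h]
  · rw [div_le_one (by exact_mod_cast h)]
    exact_mod_cast card_inter_Iio_le A n

private lemma diff_infinite (A B : Set ℕ) (hA : 0 < upperDensity A) (hB : HasDensity B 0) :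
    (A \ B).Infinite := by
  by_contra hfin
  rw [Set.not_infinite] at hfin
  set c : ℝ := ((A \ B).ncard : ℝ) with hc
  have key : ∀ n : ℕ, (Nat.card ↥(A ∩ Set.Iio n) : ℝ) / n ≤
      (Nat.card ↥(B ∩ Set.Iio n) : ℝ) / n + c / n := by
    intro n
    rw [← add_div]
    rcases Nat.eq_zero_or_pos n with h | h
    · simp [h]
    · have hsub : A ∩ Set.Iio n ⊆ (B ∩ Set.Iio n) ∪ (A \ B) := by
        rintro m ⟨hmA, hmn⟩
        by_cases hmB : m ∈ B
        · exact Or.inl ⟨hmB, hmn⟩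
        · exact Or.inr ⟨hmA, hmB⟩
      have hcard : (Nat.card ↥(A ∩ Set.Iio n) : ℝ) ≤ (Nat.card ↥(B ∩ Set.Iio n) : ℝ) + c := by
        rw [Nat.card_coe_set_eq, Nat.card_coe_set_eq, hc]
        have h1 : (A ∩ Set.Iio n).ncard ≤ (B ∩ Set.Iio n).ncard + (A \ B).ncard := by
          calc (A ∩ Set.Iio n).ncard ≤ ((B ∩ Set.Iio n) ∪ (A \ B)).ncard :=
                Set.ncard_le_ncard hsub (((Set.finite_Iio n).inter_of_right B).union hfin)
            _ ≤ (B ∩ Set.Iio n).ncard + (A \ B).ncard := Set.ncard_union_le _ _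
        exact_mod_cast h1
      gcongr
  have htend : Tendsto (fun n : ℕ => (Nat.card ↥(B ∩ Set.Iio n) : ℝ) / n + c / n)
      atTop (𝓝 0) := by
    have := hB.add (tendsto_const_div_atTop_nhds_zero_nat c)
    simpa using this
  have hle : upperDensity A ≤ 0 := by
    have hb : Filter.IsBoundedUnder (· ≥ ·) Filter.atTop
        (fun n : ℕ => (Nat.card ↥(A ∩ Set.Iio n) : ℝ) / n) :=
      Filter.isBoundedUnder_of ⟨0, fun n => densityFun_nonneg A n⟩
    have h1 := hb.isCoboundedUnder_le
    have h2 := htend.isBoundedUnder_le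
    have := Filter.limsup_le_limsup (Filter.Eventually.of_forall key) h1 h2
    rwa [htend.limsup_eq] at this
  linarith

private lemma pos_upperDensity_of_not_tendsto (A : Set ℕ)
    (h : ¬ HasDensity A 0) : 0 < upperDensity A := by
  by_contra hle
  push_neg at hle
  apply h
  have hb1 : Filter.IsBoundedUnder (· ≤ ·) Filter.atTop
      (fun n : ℕ => (Nat.card ↥(A ∩ Set.Iio n) : ℝ) / n) :=
    Filter.isBoundedUnder_of ⟨1, fun n => densityFun_le_one A n⟩
  have hb2 : Filter.IsBoundedUnder (· ≥ ·) Filter.atTop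
      (fun n : ℕ => (Nat.card ↥(A ∩ Set.Iio n) : ℝ) / n) :=
    Filter.isBoundedUnder_of ⟨0, fun n => densityFun_nonneg A n⟩
  have hliminf : (0 : ℝ) ≤ Filter.liminf
      (fun n : ℕ => (Nat.card ↥(A ∩ Set.Iio n) : ℝ) / n) Filter.atTop :=
    Filter.le_liminf_of_le hb1.isCoboundedUnder_ge
      (Filter.Eventually.of_forall fun n => densityFun_nonneg A n)
  exact tendsto_of_le_liminf_of_limsup_le hliminf hle hb1 hb2

/-- A real sequence converges statistically to `ξ` iff every set of positive upper
density contains an infinite subset along which the sequence converges to `ξ`. -/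
theorem statTendsto_iff_subseq_of_posUpperDensity (x : ℕ → ℝ) (ξ : ℝ) :
    StatTendsto x ξ ↔
      ∀ A : Set ℕ, 0 < upperDensity A →
        ∃ A' ⊆ A, A'.Infinite ∧
          Filter.Tendsto x (Filter.atTop ⊓ Filter.principal A') (nhds ξ) := by
  constructor
  · intro hx A hA
    have hinf : ∀ k : ℕ, (A ∩ {m | |x m - ξ| < 1 / (k + 1)}).Infinite := by
      intro k
      have hB := hx (1 / (k + 1)) (by positivity)
      have hd := diff_infinite A {n | 1 / ((k : ℝ) + 1) ≤ |x n - ξ|} hA hB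
      have : A \ {n | 1 / ((k : ℝ) + 1) ≤ |x n - ξ|} = A ∩ {m | |x m - ξ| < 1 / (k + 1)} := by
        ext m; simp [Set.mem_diff, not_le]
      rwa [this] at hd
    obtain ⟨F, hF⟩ : ∃ F : ℕ → ℕ → ℕ, ∀ (k b : ℕ),
        F k b ∈ A ∩ {m | |x m - ξ| < 1 / (k + 1)} ∧ b < F k b := by
      have : ∀ k b : ℕ, ∃ m, m ∈ A ∩ {m | |x m - ξ| < 1 / (k + 1)} ∧ b < m := by
        intro k b
        obtain ⟨m, hm, hbm⟩ := (hinf k).exists_gt b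
        exact ⟨m, hm, hbm⟩
      choose F hF using this
      exact ⟨F, fun k b => hF k b⟩
    set g : ℕ → ℕ := fun k => Nat.rec (F 0 0) (fun n ih => F (n + 1) ih) k with hg
    have hgsucc : ∀ k, g (k + 1) = F (k + 1) (g k) := fun k => rfl
    have hgmem : ∀ k : ℕ, g k ∈ A ∩ {m | |x m - ξ| < 1 / (k + 1)} := by
      intro k
      cases k with
      | zero => exact (hF 0 0).1
      | succ n => rw [hgsucc]; exact (hF (n + 1) (g n)).1
    have hmono : StrictMono g := strictMono_nat_of_lt_succ fun k => by
      rw [hgsucc]; exact (hF (k + 1) (g k)).2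
    refine ⟨Set.range g, ?_, Set.infinite_range_of_injective hmono.injective, ?_⟩
    · rintro m ⟨k, rfl⟩; exact (hgmem k).1
    · rw [Metric.tendsto_nhds]
      intro ε hε
      obtain ⟨k, hk⟩ := exists_nat_one_div_lt hε
      rw [Filter.eventually_inf_principal]
      filter_upwards [Filter.eventually_ge_atTop (g k)] with m hm hmem
      obtain ⟨j, rfl⟩ := hmem
      have hjk : k ≤ j := hmono.le_iff_le.mp hm
      have h1 : |x (g j) - ξ| < 1 / (j + 1) := (hgmem j).2
      have h2 : (1 : ℝ) / (j + 1) ≤ 1 / (k + 1) := by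
        apply one_div_le_one_div_of_le (by positivity)
        exact_mod_cast Nat.succ_le_succ hjk
      rw [Real.dist_eq]
      linarith
  · intro h ε hε
    by_contra hnot
    have hpos := pos_upperDensity_of_not_tendsto _ hnot
    obtain ⟨A', hsub, hinf, htend⟩ := h _ hpos
    have hne : (Filter.atTop ⊓ Filter.principal A').NeBot :=
      Filter.frequently_mem_iff_neBot.mp (Nat.frequently_atTop_iff_infinite.mpr hinf)
    have h1 : ∀ᶠ n in Filter.atTop ⊓ Filter.principal A', dist (x n) ξ < ε :=
      (Metric.tendsto_nhds.mp htend) ε hε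
    have h2 : ∀ᶠ n in Filter.atTop ⊓ Filter.principal A', n ∈ A' := by
      rw [Filter.eventually_inf_principal]
      exact Filter.Eventually.of_forall fun n hn => hn
    obtain ⟨n, hn1, hn2⟩ := (h1.and h2).exists
    have hε' : ε ≤ |x n - ξ| := hsub hn2
    rw [Real.dist_eq] at hn1
    linarith
end

section
/- A sequence of real numbers (x_n) converges statistically to x₀ if and only if there exists a subset A of ℕ of natural density 1 such that the subsequence (x_n)_{n ∈ A} converges to x₀ in the usual sense. -/
open Filter Topology Set

private lemma cnt_finite (A : Set ℕ) (n : ℕ) : (A ∩ Set.Iio n).Finite :=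
  (Set.finite_Iio n).inter_of_right A

private lemma cnt_mono {A B : Set ℕ} (h : A ⊆ B) (n : ℕ) :
    Nat.card ↥(A ∩ Set.Iio n) ≤ Nat.card ↥(B ∩ Set.Iio n) := by
  rw [Nat.card_coe_set_eq, Nat.card_coe_set_eq]
  exact Set.ncard_le_ncard (Set.inter_subset_inter_left _ h) (cnt_finite B n)

private lemma cnt_compl (A : Set ℕ) (n : ℕ) :
    Nat.card ↥(A ∩ Set.Iio n) + Nat.card ↥(Aᶜ ∩ Set.Iio n) = n := by
  rw [Nat.card_coe_set_eq, Nat.card_coe_set_eq,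
    ← Set.ncard_union_eq (by
      exact (disjoint_compl_right.mono (Set.inter_subset_left) (Set.inter_subset_left)))
      (cnt_finite A n) (cnt_finite Aᶜ n)]
  have : A ∩ Set.Iio n ∪ Aᶜ ∩ Set.Iio n = Set.Iio n := by
    rw [← Set.union_inter_distrib_right, Set.union_compl_self, Set.univ_inter]
  rw [this, ← Nat.card_coe_set_eq, Nat.card_eq_fintype_card, ← Nat.card_eq_fintype_card, Nat.card_coe_set_eq, Set.ncard_Iio_nat]

private lemma hasDensity_compl {A : Set ℕ} {δ : ℝ} (h : HasDensity A δ) :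
    HasDensity Aᶜ (1 - δ) := by
  have h1 : Tendsto (fun n : ℕ => 1 - (Nat.card ↥(A ∩ Set.Iio n) : ℝ) / n) atTop
      (nhds (1 - δ)) := tendsto_const_nhds.sub h
  refine h1.congr' ?_
  filter_upwards [eventually_ge_atTop 1] with n hn
  have hn0 : (n : ℝ) ≠ 0 := by positivity
  have hc := cnt_compl A n
  have : (Nat.card ↥(Aᶜ ∩ Set.Iio n) : ℝ) = n - Nat.card ↥(A ∩ Set.Iio n) := by
    have := congrArg (Nat.cast : ℕ → ℝ) hc
    push_cast at this
    linarith
  rw [this]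
  field_simp

private lemma hasDensity_zero_of_le {E F : Set ℕ} (N : ℕ)
    (hEF : ∀ n, Nat.card ↥(E ∩ Set.Iio n) ≤ Nat.card ↥(F ∩ Set.Iio n) + N)
    (hF : HasDensity F 0) : HasDensity E 0 := by
  have hg : Tendsto (fun n : ℕ => (Nat.card ↥(F ∩ Set.Iio n) : ℝ) / n + N / n) atTop
      (nhds (0 + 0)) :=
    hF.add (tendsto_const_nhds.div_atTop tendsto_natCast_atTop_atTop)
  rw [add_zero] at hg
  refine squeeze_zero (fun n => by positivity) (fun n => ?_) hg
  rcases Nat.eq_zero_or_pos n with rfl | hn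
  · simp
  · rw [← add_div]
    have h1 := hEF n
    have h2 : (Nat.card ↥(E ∩ Set.Iio n) : ℝ) ≤ Nat.card ↥(F ∩ Set.Iio n) + N := by
      exact_mod_cast h1
    have hn' : (0:ℝ) < n := by exact_mod_cast hn
    exact div_le_div_of_nonneg_right h2 hn'.le

private lemma ncard_Iio (n : ℕ) : (Set.Iio n).ncard = n := by
  rw [← Nat.card_coe_set_eq, Nat.card_eq_fintype_card, ← Nat.card_eq_fintype_card, Nat.card_coe_set_eq, Set.ncard_Iio_nat]

/-- A real sequence converges statistically to `x₀` iff it converges to `x₀`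
along a set of natural density 1. -/
theorem statTendsto_iff_tendsto_on_density_one (x : ℕ → ℝ) (x₀ : ℝ) :
    StatTendsto x x₀ ↔
      ∃ A : Set ℕ, HasDensity A 1 ∧
        Filter.Tendsto x (Filter.atTop ⊓ Filter.principal A) (nhds x₀) := by
  constructor
  · intro hx
    set E : ℕ → Set ℕ := fun k => {n | 1 / ((k : ℝ) + 1) ≤ |x n - x₀|} with hEdef
    have hEd : ∀ k, HasDensity (E k) 0 := fun k => hx _ (by positivity)
    have hEmono : ∀ {j k : ℕ}, j ≤ k → E j ⊆ E k := by
      intro j k hjk n hn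
      simp only [hEdef, Set.mem_setOf_eq] at hn ⊢
      refine le_trans ?_ hn
      apply one_div_le_one_div_of_le (by positivity)
      have : (j : ℝ) ≤ k := by exact_mod_cast hjk
      linarith
    have hM : ∀ k : ℕ, ∃ M : ℕ, ∀ n ≥ M,
        (Nat.card ↥(E k ∩ Set.Iio n) : ℝ) / n < 1 / (k + 1) := by
      intro k
      exact eventually_atTop.1
        ((hEd k).eventually_lt_const (by positivity : (0:ℝ) < 1 / (k+1)))
    choose M hMspec using hM
    let N : ℕ → ℕ := fun k => Nat.rec (M 0) (fun k Nk => max (Nk + 1) (M (k+1))) k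
    have hN0 : N 0 = M 0 := rfl
    have hNsucc : ∀ k, N (k+1) = max (N k + 1) (M (k+1)) := fun _ => rfl
    have hNstrict : StrictMono N := strictMono_nat_of_lt_succ (fun k => by
      rw [hNsucc]; exact lt_of_lt_of_le (Nat.lt_succ_self _) (le_max_left _ _))
    have hNM : ∀ k, M k ≤ N k := by
      intro k
      cases k with
      | zero => exact le_of_eq hN0.symm
      | succ k => rw [hNsucc]; exact le_max_right _ _
    set B : Set ℕ := ⋃ k, E k ∩ Set.Ico (N k) (N (k+1)) with hBdef
    -- key structural facts about the greatest index K with N K ≤ n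
    have hKey : ∀ k n, N k ≤ n →
        ∃ K, k ≤ K ∧ N K ≤ n ∧ n < N (K+1) ∧ B ∩ Set.Iio n ⊆ E K ∩ Set.Iio n := by
      intro k n hkn
      set K := @Nat.findGreatest (fun j => N j ≤ n) (fun j => Nat.decLe _ _) n with hKdef
      have hkn' : k ≤ n := le_trans hNstrict.le_apply hkn
      have hKle : N K ≤ n :=
        @Nat.findGreatest_spec k (fun j => N j ≤ n) (fun j => Nat.decLe _ _) n hkn' hkn
      have hkK : k ≤ K :=
        @Nat.le_findGreatest k (fun j => N j ≤ n) (fun j => Nat.decLe _ _) n hkn' hkn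
      have hlt : n < N (K+1) := by
        by_contra h
        push_neg at h
        have h1 : K + 1 ≤ n := le_trans hNstrict.le_apply h
        exact (@Nat.findGreatest_is_greatest (K+1) (fun j => N j ≤ n)
          (fun j => Nat.decLe _ _) n (Nat.lt_succ_self K) h1) h
      refine ⟨K, hkK, hKle, hlt, ?_⟩
      rintro m ⟨hmB, hmn⟩
      rw [hBdef] at hmB
      obtain ⟨j, hj⟩ : ∃ j, m ∈ E j ∩ Set.Ico (N j) (N (j+1)) := by
        simpa using hmB
      obtain ⟨hmE, hmN, _⟩ := hj
      have hjK : j ≤ K := by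
        by_contra h
        push_neg at h
        have : N (K+1) ≤ N j := hNstrict.monotone h
        have h2 : N (K+1) ≤ m := le_trans this hmN
        exact absurd hlt (not_lt.2 (h2.trans hmn.le))
      exact ⟨hEmono hjK hmE, hmn⟩
    have hBd : HasDensity B 0 := by
      rw [HasDensity, Metric.tendsto_atTop]
      intro ε hε
      obtain ⟨k, hk⟩ := exists_nat_one_div_lt hε
      refine ⟨N k, fun n hn => ?_⟩
      obtain ⟨K, hkK, hKle, _, hBsub⟩ := hKey k n hn
      have h1 : (Nat.card ↥(B ∩ Set.Iio n) : ℝ) / n ≤ (Nat.card ↥(E K ∩ Set.Iio n) : ℝ) / n := by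
        rcases Nat.eq_zero_or_pos n with rfl | hn0
        · simp
        · have : Nat.card ↥(B ∩ Set.Iio n) ≤ Nat.card ↥(E K ∩ Set.Iio n) := by
            rw [Nat.card_coe_set_eq, Nat.card_coe_set_eq]
            exact Set.ncard_le_ncard hBsub (cnt_finite _ n)
          exact div_le_div_of_nonneg_right (by exact_mod_cast this) (by positivity)
      have h2 : (Nat.card ↥(E K ∩ Set.Iio n) : ℝ) / n < 1 / (K + 1) :=
        hMspec K n (le_trans (hNM K) hKle)
      have h3 : (1 : ℝ) / (K + 1) ≤ 1 / (k + 1) := by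
        apply one_div_le_one_div_of_le (by positivity)
        have : (k : ℝ) ≤ K := by exact_mod_cast hkK
        linarith
      have hnonneg : (0:ℝ) ≤ (Nat.card ↥(B ∩ Set.Iio n) : ℝ) / n := by positivity
      rw [Real.dist_eq, sub_zero, abs_of_nonneg hnonneg]
      linarith
    refine ⟨Bᶜ, by simpa using hasDensity_compl hBd, ?_⟩
    rw [Metric.tendsto_nhds]
    intro ε hε
    rw [eventually_inf_principal]
    obtain ⟨k, hk⟩ := exists_nat_one_div_lt hε
    filter_upwards [eventually_ge_atTop (N k)] with n hn hnA
    by_contra h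
    push_neg at h
    rw [Real.dist_eq] at h
    have hnE : n ∈ E k := le_trans hk.le h
    obtain ⟨K, hkK, hKle, hlt, _⟩ := hKey k n hn
    exact hnA (Set.mem_iUnion.2 ⟨K, hEmono hkK hnE, hKle, hlt⟩)
  · rintro ⟨A, hA1, hAt⟩
    intro ε hε
    have h := Metric.tendsto_nhds.1 hAt ε hε
    rw [eventually_inf_principal] at h
    obtain ⟨M₀, hM₀⟩ := eventually_atTop.1 h
    have hAc : HasDensity Aᶜ 0 := by simpa using hasDensity_compl hA1
    refine hasDensity_zero_of_le M₀ (fun n => ?_) hAc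
    have hsub : {m | ε ≤ |x m - x₀|} ∩ Set.Iio n ⊆ (Aᶜ ∩ Set.Iio n) ∪ Set.Iio M₀ := by
      rintro m ⟨hmE, hmn⟩
      by_cases hmA : m ∈ A
      · right
        by_contra hm
        rw [Set.mem_Iio, not_lt] at hm
        have := hM₀ m hm hmA
        rw [Real.dist_eq] at this
        exact absurd hmE (not_le.2 this)
      · exact Or.inl ⟨hmA, hmn⟩
    rw [Nat.card_coe_set_eq, Nat.card_coe_set_eq]
    calc ({m | ε ≤ |x m - x₀|} ∩ Set.Iio n).ncard
        ≤ ((Aᶜ ∩ Set.Iio n) ∪ Set.Iio M₀).ncard :=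
          Set.ncard_le_ncard hsub ((cnt_finite _ n).union (Set.finite_Iio M₀))
      _ ≤ (Aᶜ ∩ Set.Iio n).ncard + (Set.Iio M₀).ncard := Set.ncard_union_le _ _
      _ = (Aᶜ ∩ Set.Iio n).ncard + M₀ := by rw [ncard_Iio]
end

section
/- Let (a_n) be an arithmetic sequence, x ∈ 𝕋 with canonical representation x = Σ c_n/a_n, and B ⊆ ℕ with positive upper natural density such that lim_{n ∈ B} a_{n-1}x = 0 in 𝕋. If d(B ∩ supp(x)) = 0, then there exists B' ⊆ B with d(B \ B') = 0 such that lim_{n ∈ B'} {a_{n-1}x} = 0 in ℝ (i.e., the fractional parts converge to 0 as real numbers, not merely modulo 1). -/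
open Filter Topology Set

/-- An arithmetic sequence: `a 0 = 1 < a 1 < a 2 < ⋯` and `a n ∣ a (n+1)`. -/
def IsArithmeticSeq (a : ℕ → ℕ) : Prop :=
  a 0 = 1 ∧ StrictMono a ∧ ∀ n, a n ∣ a (n + 1)

/-- The ratio `q n = a n / a (n-1)` as a real number. -/
noncomputable def qr (a : ℕ → ℕ) (n : ℕ) : ℝ := (a n : ℝ) / (a (n - 1) : ℝ)

/-- `(c n)` is a canonical representation sequence w.r.t. `(a n)`:
`0 ≤ c n < q n` and `c n < q n - 1` for infinitely many `n`. -/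
def IsCanonicalRep (a : ℕ → ℕ) (c : ℕ → ℕ) : Prop :=
  c 0 = 0 ∧ (∀ n, 1 ≤ n → c n < a n / a (n - 1)) ∧
    (∀ N, ∃ n, N ≤ n ∧ 1 ≤ n ∧ c n + 1 < a n / a (n - 1))

/-- Support of (the canonical representation of) `x`. -/
def suppRep (c : ℕ → ℕ) : Set ℕ := {n | 1 ≤ n ∧ c n ≠ 0}

/-- `supp_q(x) = {n : c n = q n - 1}`. -/
def suppqRep (a c : ℕ → ℕ) : Set ℕ := {n | 1 ≤ n ∧ c n + 1 = a n / a (n - 1)}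

/-- A set `S ⊆ ℕ` is `q`-bounded if `(q n)` is bounded on `S`. -/
def QBounded (a : ℕ → ℕ) (S : Set ℕ) : Prop := ∃ M, ∀ n ∈ S, a n / a (n - 1) ≤ M

/-- A set `S ⊆ ℕ` is `q`-divergent if `q n → ∞` along `n ∈ S`. -/
def QDivergent (a : ℕ → ℕ) (S : Set ℕ) : Prop :=
  Filter.Tendsto (fun n => a n / a (n - 1)) (Filter.atTop ⊓ Filter.principal S) Filter.atTop

/-- Statistical convergence in a topological space, via neighborhoods. -/
def StatNhdTendsto {α : Type*} [TopologicalSpace α] (y : ℕ → α) (ℓ : α) : Prop :=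
  ∀ U ∈ nhds ℓ, HasDensity {n | y n ∉ U} 0

section Aux
variable {a c : ℕ → ℕ}

lemma aux_one_le (ha : IsArithmeticSeq a) : ∀ n, 1 ≤ a n := by
  intro n
  calc 1 = a 0 := ha.1.symm
  _ ≤ a n := ha.2.1.monotone (Nat.zero_le n)

lemma aux_dvd (ha : IsArithmeticSeq a) {m n : ℕ} (h : m ≤ n) : a m ∣ a n := by
  induction n with
  | zero => simp [Nat.le_zero.mp h]
  | succ k ih =>
    rcases Nat.lt_or_ge m (k+1) with h' | h'
    · exact (ih (Nat.lt_succ_iff.mp h')).trans (ha.2.2 k)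
    · have : m = k + 1 := le_antisymm h h'
      simp [this]

lemma aux_two_mul (ha : IsArithmeticSeq a) (n : ℕ) : 2 * a n ≤ a (n+1) := by
  obtain ⟨k, hk⟩ := ha.2.2 n
  have h1 : a n < a (n+1) := ha.2.1 (Nat.lt_succ_self n)
  have h0 : 1 ≤ a n := aux_one_le ha n
  rcases Nat.lt_or_ge k 2 with hk2 | hk2
  · interval_cases k <;> omega
  · calc 2 * a n ≤ a n * k := by nlinarith
    _ = a (n+1) := hk.symm

lemma aux_pow_le (ha : IsArithmeticSeq a) (n : ℕ) : 2 ^ n ≤ a n := by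
  induction n with
  | zero => simp [ha.1]
  | succ k ih =>
    calc 2 ^ (k+1) = 2 * 2 ^ k := by ring
    _ ≤ 2 * a k := by omega
    _ ≤ a (k+1) := aux_two_mul ha k

/-- key: (c n + 1) * a (n-1) ≤ a n for n ≥ 1. -/
lemma aux_key (ha : IsArithmeticSeq a) (hc : IsCanonicalRep a c) {n : ℕ} (hn : 1 ≤ n) :
    (c n + 1) * a (n - 1) ≤ a n := by
  have hd : a (n-1) ∣ a n := by
    have := ha.2.2 (n-1); rwa [Nat.sub_add_cancel hn] at this
  have h1 : c n + 1 ≤ a n / a (n-1) := hc.2.1 n hn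
  calc (c n + 1) * a (n-1) ≤ (a n / a (n-1)) * a (n-1) :=
        Nat.mul_le_mul_right _ h1
  _ = a n := Nat.div_mul_cancel hd

lemma aux_summable (ha : IsArithmeticSeq a) (hc : IsCanonicalRep a c) :
    Summable (fun n => (c n : ℝ) / (a n : ℝ)) := by
  refine Summable.of_nonneg_of_le (fun n => by positivity) (fun n => ?_)
    ((summable_geometric_of_lt_one (by norm_num) (by norm_num : (1/2:ℝ) < 1)).mul_left 2)
  · show (c n : ℝ) / (a n : ℝ) ≤ 2 * (1/2 : ℝ) ^ n
    rcases Nat.eq_zero_or_pos n with rfl | hn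
    · simp [hc.1]
    · obtain ⟨m, rfl⟩ : ∃ m, n = m + 1 := ⟨n-1, (Nat.succ_pred_eq_of_pos hn).symm⟩
      have hkey := aux_key ha hc hn
      simp only [Nat.add_sub_cancel] at hkey
      have hp : (0:ℝ) < a m := by exact_mod_cast aux_one_le ha m
      have hq : (0:ℝ) < a (m+1) := by exact_mod_cast aux_one_le ha (m+1)
      have h1 : (c (m+1) : ℝ) / a (m+1) ≤ 1 / a m := by
        rw [div_le_div_iff₀ hq hp]
        have := (Nat.cast_le (α := ℝ)).mpr hkey
        push_cast at this ⊢
        nlinarith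
      have h2 : (1:ℝ) / a m ≤ 2 * (1/2) ^ (m+1) := by
        have hpow : (2:ℝ) ^ m ≤ a m := by exact_mod_cast aux_pow_le ha m
        have hpow0 : (0:ℝ) < 2 ^ m := by positivity
        have h3 : (1:ℝ) / a m ≤ 1 / 2 ^ m := one_div_le_one_div_of_le hpow0 hpow
        calc (1:ℝ) / a m ≤ 1 / 2 ^ m := h3
        _ = 2 * (1/2) ^ (m+1) := by
            rw [div_pow, one_pow, pow_succ]
            field_simp
      exact h1.trans h2

/-- tail bound: a n · ∑_{i ≥ n+1} c_i/a_i ≤ 1. -/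
lemma aux_tail (ha : IsArithmeticSeq a) (hc : IsCanonicalRep a c) (n : ℕ) :
    ∑' i, (c (i + (n+1)) : ℝ) / (a (i + (n+1)) : ℝ) ≤ 1 / a n := by
  apply Real.tsum_le_of_sum_range_le (fun i => by positivity)
  intro N
  have hbound : ∀ i, (c (i + (n+1)) : ℝ) / (a (i + (n+1)) : ℝ)
      ≤ 1 / a (n + i) - 1 / a (n + i + 1) := by
    intro i
    have hn1 : 1 ≤ i + (n+1) := by omega
    have hkey := aux_key ha hc hn1
    have heq : i + (n+1) - 1 = n + i := by omega
    rw [heq] at hkey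
    have heq2 : i + (n+1) = n + i + 1 := by omega
    rw [heq2] at hkey ⊢
    have hp : (0:ℝ) < a (n+i) := by exact_mod_cast aux_one_le ha (n+i)
    have hq : (0:ℝ) < a (n+i+1) := by exact_mod_cast aux_one_le ha (n+i+1)
    have hcast : ((c (n+i+1) : ℝ) + 1) * a (n+i) ≤ a (n+i+1) := by
      exact_mod_cast hkey
    rw [div_sub_div _ _ (ne_of_gt hp) (ne_of_gt hq), div_le_div_iff₀ hq (by positivity)]
    nlinarith
  calc ∑ i ∈ Finset.range N, (c (i + (n+1)) : ℝ) / (a (i + (n+1)) : ℝ)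
      ≤ ∑ i ∈ Finset.range N, ((1:ℝ) / a (n + i) - 1 / a (n + i + 1)) :=
        Finset.sum_le_sum (fun i _ => hbound i)
  _ = 1 / a (n + 0) - 1 / a (n + N) := Finset.sum_range_sub' (fun i => (1:ℝ) / a (n+i)) N
  _ ≤ 1 / a n := by
      have : (0:ℝ) < a (n + N) := by exact_mod_cast aux_one_le ha (n+N)
      simp only [Nat.add_zero]
      have : (0:ℝ) ≤ 1 / a (n + N) := by positivity
      linarith


lemma aux_norm {u : ℝ} (h0 : 0 ≤ u) (h2 : u ≤ 1/2) : ‖((u : ℝ) : AddCircle (1:ℝ))‖ = u := by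
  rw [AddCircle.norm_eq]
  simp only [inv_one, one_mul, mul_one]
  rcases lt_or_eq_of_le h2 with h | h
  · have : round u = 0 := by
      rw [round_eq]
      apply Int.floor_eq_zero_iff.mpr
      constructor <;> simp <;> linarith
    rw [this]
    simpa using abs_of_nonneg h0
  · subst h
    norm_num [round_eq]

end Aux


/-- Lemma 1.8 (ii): if `B` has positive upper density, `a_{n-1} x → 0` along `B`,
and `d(B ∩ supp(x)) = 0`, then the fractional parts `{a_{n-1} x}` converge to `0`
in `ℝ` along some `B' ⊆ B` with `d(B \ B') = 0`. -/
theorem lemma_nec_ii (a c : ℕ → ℕ) (ha : IsArithmeticSeq a) (hc : IsCanonicalRep a c)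
    (x : AddCircle (1 : ℝ))
    (hx : x = ((∑' n, (c n : ℝ) / (a n : ℝ) : ℝ) : AddCircle (1 : ℝ)))
    (B : Set ℕ) (hB : 0 < upperDensity B)
    (hlim : Filter.Tendsto (fun n => a (n - 1) • x)
      (Filter.atTop ⊓ Filter.principal B) (nhds 0))
    (hd : HasDensity (B ∩ suppRep c) 0) :
    ∃ B' ⊆ B, HasDensity (B \ B') 0 ∧
      Filter.Tendsto
        (fun n => Int.fract ((a (n - 1) : ℝ) * ∑' i, (c i : ℝ) / (a i : ℝ)))
        (Filter.atTop ⊓ Filter.principal B') (nhds 0) := by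
  classical
  set f : ℕ → ℝ := fun n => (c n : ℝ) / (a n : ℝ) with hfdef
  have hsum : Summable f := aux_summable ha hc
  set S : ℝ := ∑' i, f i with hSdef
  set B' : Set ℕ := B \ suppRep c with hB'def
  refine ⟨B', diff_subset, ?_, ?_⟩
  · have hBB : B \ B' = B ∩ suppRep c := by
      ext n; simp only [hB'def, mem_diff, mem_inter_iff]; tauto
    rwa [hBB]
  · set L : Filter ℕ := Filter.atTop ⊓ Filter.principal B' with hLdef
    set u : ℕ → ℝ := fun n => (a (n-1) : ℝ) * ∑' i, f (i + n) with hudef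
    -- key pointwise facts
    have key : ∀ n, 1 ≤ n → n ∈ B' →
        Int.fract ((a (n-1) : ℝ) * S) = u n ∧ 0 ≤ u n ∧ u n ≤ 1/2 ∧
          (a (n-1)) • x = ((u n : ℝ) : AddCircle (1:ℝ)) := by
      intro n hn hnB'
      have hc0 : c n = 0 := by
        have := hnB'.2
        simp only [suppRep, mem_setOf_eq, not_and_or, not_not] at this
        rcases this with h | h
        · omega
        · exact h
      have hp : (0:ℝ) < a (n-1) := by exact_mod_cast aux_one_le ha (n-1)
      have hq : (0:ℝ) < a n := by exact_mod_cast aux_one_le ha n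
      -- tail split: ∑' i, f (i+n) = ∑' i, f (i+(n+1))
      have htail_eq : ∑' i, f (i + n) = ∑' i, f (i + (n+1)) := by
        rw [Summable.tsum_eq_zero_add ((summable_nat_add_iff n).mpr hsum)]
        have hfn : f n = 0 := by simp [hfdef, hc0]
        simp only [zero_add, hfn, zero_add]
        exact tsum_congr (fun i => by rw [show i + 1 + n = i + (n+1) from by omega])
      set T : ℝ := ∑' i, f (i + (n+1)) with hTdef
      have hT0 : 0 ≤ T := tsum_nonneg (fun i => by positivity)
      have hTle : T ≤ 1 / a n := by
        have := aux_tail ha hc (n := n)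
        simpa [hTdef, hfdef] using this
      have h2a : 2 * (a (n-1) : ℝ) ≤ a n := by
        have := aux_two_mul ha (n-1)
        rw [Nat.sub_add_cancel hn] at this
        exact_mod_cast this
      have hu_eq : u n = (a (n-1) : ℝ) * T := by rw [hudef]; simp only; rw [htail_eq]
      have hu0 : 0 ≤ u n := by rw [hu_eq]; positivity
      have hu_half : u n ≤ 1/2 := by
        rw [hu_eq]
        have haT : (a n : ℝ) * T ≤ 1 := by
          rw [le_div_iff₀ hq] at hTle; linarith [mul_comm T (a n : ℝ)]
        nlinarith [mul_nonneg (sub_nonneg.mpr h2a) hT0]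
      -- integer part
      set K : ℕ := ∑ i ∈ Finset.range n, c i * (a (n-1) / a i) with hKdef
      have hKcast : (K : ℝ) = (a (n-1) : ℝ) * ∑ i ∈ Finset.range n, f i := by
        rw [hKdef, Finset.mul_sum]
        push_cast
        refine Finset.sum_congr rfl (fun i hi => ?_)
        have hdvd : a i ∣ a (n-1) := aux_dvd ha (by
          simp only [Finset.mem_range] at hi; omega)
        have hip : (0:ℝ) < a i := by exact_mod_cast aux_one_le ha i
        rw [Nat.cast_div hdvd (ne_of_gt hip)]
        field_simp [hfdef]
        rw [hfdef]; field_simp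
      have hsplit : (a (n-1) : ℝ) * S = (K : ℝ) + u n := by
        rw [hSdef, ← Summable.sum_add_tsum_nat_add n hsum, mul_add, hKcast, hudef]
      have hfract : Int.fract ((a (n-1) : ℝ) * S) = u n := by
        rw [hsplit, show ((K:ℝ) : ℝ) = ((K : ℤ) : ℝ) by push_cast; ring,
          Int.fract_intCast_add]
        exact Int.fract_eq_self.mpr ⟨hu0, lt_of_le_of_lt hu_half (by norm_num)⟩
      -- circle equality
      have hcirc : (a (n-1)) • x = ((u n : ℝ) : AddCircle (1:ℝ)) := by
        rw [hx]
        have h1 : (a (n-1)) • ((S : ℝ) : AddCircle (1:ℝ))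
            = (((a (n-1) : ℝ) * S : ℝ) : AddCircle (1:ℝ)) := by
          rw [← nsmul_eq_mul]
          exact (map_nsmul (QuotientAddGroup.mk' (AddSubgroup.zmultiples (1:ℝ)))
            (a (n-1)) S).symm
        rw [show ((∑' i, (c i : ℝ) / (a i : ℝ) : ℝ) : AddCircle (1:ℝ))
            = ((S : ℝ) : AddCircle (1:ℝ)) by rw [hSdef], h1, hsplit]
        have hK0 : (((K : ℝ)) : AddCircle (1:ℝ)) = 0 := by
          rw [AddCircle.coe_eq_zero_iff]
          exact ⟨K, by rw [zsmul_eq_mul]; push_cast; ring⟩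
        rw [show (((K:ℝ) + u n : ℝ) : AddCircle (1:ℝ))
            = (((K:ℝ) : ℝ) : AddCircle (1:ℝ)) + ((u n : ℝ) : AddCircle (1:ℝ)) from rfl,
          hK0, zero_add]
      exact ⟨hfract, hu0, hu_half, hcirc⟩
    -- norm convergence along B'
    have hmono : L ≤ Filter.atTop ⊓ Filter.principal B :=
      inf_le_inf_left _ (principal_mono.mpr diff_subset)
    have hnorm : Tendsto (fun n => ‖a (n-1) • x‖) L (𝓝 0) :=
      tendsto_zero_iff_norm_tendsto_zero.mp (hlim.mono_left hmono)
    have hev : ∀ᶠ n in L, 1 ≤ n ∧ n ∈ B' := by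
      have h1 : ∀ᶠ n in L, 1 ≤ n := (eventually_ge_atTop 1).filter_mono inf_le_left
      have h2 : ∀ᶠ n in L, n ∈ B' := by
        rw [hLdef, eventually_inf_principal]
        exact Eventually.of_forall (fun n h => h)
      exact h1.and h2
    have hEq : (fun n => Int.fract ((a (n-1) : ℝ) * S)) =ᶠ[L]
        (fun n => ‖a (n-1) • x‖) := by
      filter_upwards [hev] with n hn
      obtain ⟨hfract, hu0, huh, hcirc⟩ := key n hn.1 hn.2
      rw [hfract, hcirc, aux_norm hu0 huh]
    exact hnorm.congr' hEq.symm
end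

section
/- Define q_n as the 2-adic valuation of n plus 1, i.e., q_n = i where n = 2^{i-1}(2k-1) for some k ∈ ℕ. Then for each i, the set A_i = {n : q_n = i} has natural density 1/2^i, and the sequence (q_n) does not have the d-splitting property. -/
open Filter Topology Set

/-- The `d`-splitting property of a sequence `(q n)` of naturals. -/
def HasDSplitting (q : ℕ → ℕ) : Prop :=
  ∃ B D : Set ℕ, B ∪ D = Set.univ ∧ Disjoint B D ∧
    (B = ∅ ∨ 0 < upperDensity B) ∧ (D = ∅ ∨ 0 < upperDensity D) ∧
    (0 < upperDensity B →
      ∃ B' : Set ℕ, HasDensity (symmDiff B B') 0 ∧ ∃ M, ∀ n ∈ B', q n ≤ M) ∧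
    (0 < upperDensity D →
      ∃ D' : Set ℕ, HasDensity (symmDiff D D') 0 ∧
        Filter.Tendsto q (Filter.atTop ⊓ Filter.principal D') Filter.atTop)

/-- The splitting property of a sequence `(q n)` of naturals. -/
def HasSplitting (q : ℕ → ℕ) : Prop :=
  ∃ B I : Set ℕ, B ∪ I = Set.univ ∧ Disjoint B I ∧
    (B = ∅ ∨ B.Infinite) ∧ (I = ∅ ∨ I.Infinite) ∧
    (B.Infinite → ∃ M, ∀ n ∈ B, q n ≤ M) ∧
    (I.Infinite → Filter.Tendsto q (Filter.atTop ⊓ Filter.principal I) Filter.atTop)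

/-- If the counting function stays within a bounded distance of `δ * n`, then the
set has density `δ`. -/
lemma hasDensity_of_bounds {A : Set ℕ} {δ C : ℝ}
    (h : ∀ᶠ n : ℕ in atTop, |(Nat.card ↥(A ∩ Set.Iio n) : ℝ) - δ * n| ≤ C) :
    HasDensity A δ := by
  have h0 : Tendsto (fun n : ℕ => (Nat.card ↥(A ∩ Set.Iio n) : ℝ) / n - δ) atTop (𝓝 0) := by
    apply squeeze_zero_norm' (a := fun n : ℕ => C / n)
    · filter_upwards [h, eventually_ge_atTop 1] with n hn hn1
      have hnpos : (0:ℝ) < n := by exact_mod_cast hn1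
      have he : (Nat.card ↥(A ∩ Set.Iio n) : ℝ) / n - δ
          = ((Nat.card ↥(A ∩ Set.Iio n) : ℝ) - δ * n) / n := by
        field_simp
      rw [Real.norm_eq_abs, he, abs_div, abs_of_pos hnpos]
      gcongr
    · exact tendsto_const_div_atTop_nhds_zero_nat C
  have := h0.add_const δ
  simpa [HasDensity] using this

/-- Finite sets have density zero. -/
lemma hasDensity_zero_of_finite {A : Set ℕ} (hA : A.Finite) : HasDensity A 0 := by
  apply hasDensity_of_bounds (C := (Nat.card A : ℝ))
  filter_upwards with n
  have : Nat.card ↥(A ∩ Set.Iio n) ≤ Nat.card A :=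
    Nat.card_mono hA Set.inter_subset_left
  rw [zero_mul, sub_zero, abs_of_nonneg (by positivity)]
  exact_mod_cast this

/-- A subset of a set of density zero has density zero. -/
lemma hasDensity_zero_of_subset {A S : Set ℕ} (h : A ⊆ S) (hS : HasDensity S 0) :
    HasDensity A 0 := by
  apply squeeze_zero' (g := fun n : ℕ => (Nat.card ↥(S ∩ Set.Iio n) : ℝ) / n)
  · filter_upwards with n; positivity
  · filter_upwards with n
    gcongr
    exact_mod_cast Nat.card_mono ((Set.finite_Iio n).inter_of_right _)
      (Set.inter_subset_inter_left _ h)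
  · exact hS

/-- The union of two density-zero sets has density zero. -/
lemma hasDensity_zero_union {S T : Set ℕ} (hS : HasDensity S 0) (hT : HasDensity T 0) :
    HasDensity (S ∪ T) 0 := by
  apply squeeze_zero' (g := fun n : ℕ =>
    (Nat.card ↥(S ∩ Set.Iio n) : ℝ) / n + (Nat.card ↥(T ∩ Set.Iio n) : ℝ) / n)
  · filter_upwards with n; positivity
  · filter_upwards with n
    rw [← add_div]
    gcongr
    have : (S ∪ T) ∩ Set.Iio n = (S ∩ Set.Iio n) ∪ (T ∩ Set.Iio n) := by
      rw [Set.union_inter_distrib_right]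
    rw [this]
    rw [Nat.card_coe_set_eq, Nat.card_coe_set_eq, Nat.card_coe_set_eq]
    exact_mod_cast Set.ncard_union_le _ _
  · simpa using hS.add hT

/-- The residue class `{Q j + r : j ∈ ℕ}` (with `r < Q`) has density `1 / Q`. -/
lemma hasDensity_residue (Q r : ℕ) (hr : r < Q) :
    HasDensity {n : ℕ | ∃ j, n = Q * j + r} ((1:ℝ) / Q) := by
  have hQ : 0 < Q := by omega
  apply hasDensity_of_bounds (C := (r + Q + 1 : ℝ))
  filter_upwards [eventually_ge_atTop (r + 1)] with N hN
  set K := (N - r - 1) / Q + 1 with hK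
  have hset : {n : ℕ | ∃ j, n = Q * j + r} ∩ Set.Iio N
      = (fun j => Q * j + r) '' Set.Iio K := by
    ext n
    simp only [Set.mem_inter_iff, Set.mem_setOf_eq, Set.mem_Iio, Set.mem_image]
    constructor
    · rintro ⟨⟨j, rfl⟩, hlt⟩
      refine ⟨j, ?_, rfl⟩
      have hc : Q * j = j * Q := Nat.mul_comm _ _
      have : j ≤ (N - r - 1) / Q := (Nat.le_div_iff_mul_le hQ).2 (by omega)
      omega
    · rintro ⟨j, hj, rfl⟩
      have hj' : j ≤ (N - r - 1) / Q := by omega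
      have := (Nat.le_div_iff_mul_le hQ).1 hj'
      have hc : Q * j = j * Q := Nat.mul_comm _ _
      exact ⟨⟨j, rfl⟩, by omega⟩
  have hinj : Function.Injective (fun j => Q * j + r) := by
    intro a b hab
    simp only at hab
    exact Nat.eq_of_mul_eq_mul_left hQ (by omega)
  have hcard : Nat.card ↥({n : ℕ | ∃ j, n = Q * j + r} ∩ Set.Iio N) = K := by
    rw [hset, Nat.card_image_of_injective hinj, Nat.card_coe_set_eq,
      Set.ncard_eq_toFinset_card']
    simp
  rw [hcard]
  have e1 := Nat.div_add_mod (N - r - 1) Q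
  have e2 := Nat.mod_lt (N - r - 1) hQ
  have hQK : Q * K = Q * ((N - r - 1) / Q) + Q := by rw [hK]; ring
  set t := Q * ((N - r - 1) / Q) with ht
  set m := (N - r - 1) % Q with hm
  have f1 : N < t + Q + r + 1 := by omega
  have f2 : t ≤ N := by omega
  have fc1 : (N : ℝ) < t + Q + r + 1 := by exact_mod_cast f1
  have fc2 : (t : ℝ) ≤ N := by exact_mod_cast f2
  have fcK : (Q : ℝ) * K = t + Q := by exact_mod_cast hQK
  have hQ1 : (1 : ℝ) ≤ Q := by exact_mod_cast hQ
  have hQpos : (0 : ℝ) < Q := by exact_mod_cast hQ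
  have hr0 : (0 : ℝ) ≤ r := by positivity
  have he : (K : ℝ) - 1 / Q * N = ((Q : ℝ) * K - N) / Q := by field_simp
  rw [he, abs_div, abs_of_pos hQpos, div_le_iff₀ hQpos, abs_le]
  constructor
  · nlinarith [mul_le_mul_of_nonneg_right hQ1 (by positivity : (0:ℝ) ≤ (r:ℝ) + Q + 1)]
  · nlinarith [mul_le_mul_of_nonneg_right hQ1 (by positivity : (0:ℝ) ≤ (r:ℝ) + Q + 1)]

/-- Example: for `q n = (2-adic valuation of n) + 1`, each `A_i = {n : q n = i}`
has natural density `1/2^i`, and `(q n)` is not a `d`-splitting sequence. -/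
theorem not_dSplitting_of_dyadic (q : ℕ → ℕ)
    (hq : ∀ i k : ℕ, 1 ≤ i → 1 ≤ k → q (2 ^ (i - 1) * (2 * k - 1)) = i) :
    (∀ i, 1 ≤ i → HasDensity {n | 1 ≤ n ∧ q n = i} ((1 : ℝ) / 2 ^ i)) ∧
      ¬ HasDSplitting q := by
  have key : ∀ v t : ℕ, q (2 ^ v * (2 * t + 1)) = v + 1 := by
    intro v t
    have h := hq (v + 1) (t + 1) (by omega) (by omega)
    have e : 2 ^ (v + 1 - 1) * (2 * (t + 1) - 1) = 2 ^ v * (2 * t + 1) := by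
      rw [Nat.add_sub_cancel]; congr 1
    rwa [e] at h
  have hdens : ∀ i, 1 ≤ i → HasDensity {n | 1 ≤ n ∧ q n = i} ((1 : ℝ) / 2 ^ i) := by
    intro i hi
    obtain ⟨i', rfl⟩ : ∃ i', i = i' + 1 := ⟨i - 1, by omega⟩
    have hset : {n | 1 ≤ n ∧ q n = i' + 1}
        = {n : ℕ | ∃ j, n = 2 ^ (i' + 1) * j + 2 ^ i'} := by
      ext n
      simp only [Set.mem_setOf_eq]
      constructor
      · rintro ⟨hn1, hqn⟩
        obtain ⟨v, m, hm, rfl⟩ := Nat.exists_eq_two_pow_mul_odd (n := n) (by omega)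
        obtain ⟨t, rfl⟩ := hm
        rw [key v t] at hqn
        have hv : v = i' := by omega
        subst hv
        exact ⟨t, by ring⟩
      · rintro ⟨j, rfl⟩
        have e : 2 ^ (i' + 1) * j + 2 ^ i' = 2 ^ i' * (2 * j + 1) := by ring
        constructor
        · have := Nat.one_le_two_pow (n := i'); omega
        · rw [e, key i' j]
    rw [hset]
    have hlt : 2 ^ i' < 2 ^ (i' + 1) := Nat.pow_lt_pow_right one_lt_two (lt_add_one i')
    have := hasDensity_residue (2 ^ (i' + 1)) (2 ^ i') hlt
    convert this using 2
    push_cast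
    ring
  refine ⟨hdens, ?_⟩
  rintro ⟨B, D, hUD, hdisj, hB, hD, hBpr, hDpr⟩
  -- extract a uniform witness
  obtain ⟨B', hB'd, M, hB'M⟩ :
      ∃ B' : Set ℕ, HasDensity (symmDiff B B') 0 ∧ ∃ M, ∀ n ∈ B', q n ≤ M := by
    rcases hB with hBe | hBpos
    · refine ⟨∅, ?_, 0, by simp⟩
      subst hBe
      simpa [symmDiff_self] using hasDensity_zero_of_finite (Set.finite_empty)
    · exact hBpr hBpos
  obtain ⟨D', hD'd, hD'tend⟩ :
      ∃ D' : Set ℕ, HasDensity (symmDiff D D') 0 ∧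
        Filter.Tendsto q (Filter.atTop ⊓ Filter.principal D') Filter.atTop := by
    rcases hD with hDe | hDpos
    · refine ⟨∅, ?_, ?_⟩
      · subst hDe
        simpa [symmDiff_self] using hasDensity_zero_of_finite (Set.finite_empty)
      · rw [Filter.principal_empty, inf_bot_eq]
        exact Filter.tendsto_bot
    · exact hDpr hDpos
  -- the set where q n = M+1
  set A : Set ℕ := {n | 1 ≤ n ∧ q n = M + 1} with hA
  have hApos : HasDensity A ((1 : ℝ) / 2 ^ (M + 1)) := hdens (M + 1) (by omega)
  -- third exceptional set is finite
  have hTfin : Set.Finite {n | n ∈ D' ∧ q n ≤ M + 1} := by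
    have h1 : ∀ᶠ n in atTop ⊓ 𝓟 D', M + 2 ≤ q n := hD'tend.eventually_ge_atTop (M + 2)
    rw [Filter.eventually_inf_principal] at h1
    obtain ⟨N₀, hN₀⟩ := Filter.eventually_atTop.1 h1
    apply Set.Finite.subset (Set.finite_Iio N₀)
    rintro n ⟨hnD, hnq⟩
    by_contra hn
    have : N₀ ≤ n := by simpa [Set.mem_Iio] using hn
    exact absurd (hN₀ n this hnD) (by omega)
  -- the covering
  have hcover : A ⊆ (symmDiff B B' ∪ symmDiff D D') ∪ {n | n ∈ D' ∧ q n ≤ M + 1} := by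
    rintro n ⟨hn1, hnq⟩
    have hnBD : n ∈ B ∪ D := hUD ▸ Set.mem_univ n
    rcases hnBD with hnB | hnD
    · left; left
      rw [Set.mem_symmDiff]
      left
      refine ⟨hnB, fun hnB' => ?_⟩
      have := hB'M n hnB'
      omega
    · by_cases hnD' : n ∈ D'
      · right
        exact ⟨hnD', by omega⟩
      · left; right
        rw [Set.mem_symmDiff]
        exact Or.inl ⟨hnD, hnD'⟩
  have hA0 : HasDensity A 0 :=
    hasDensity_zero_of_subset hcover
      (hasDensity_zero_union (hasDensity_zero_union hB'd hD'd)
        (hasDensity_zero_of_finite hTfin))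
  have := tendsto_nhds_unique hApos hA0
  have h2 : (0:ℝ) < 1 / 2 ^ (M + 1) := by positivity
  rw [this] at h2
  exact lt_irrefl _ h2
end
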